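/- With notation as above, the two representations of the PGF G_0 coincide: P_0 ∏_{κ=1}^{K-1} (1 - z_κ ζ_+^{κ-1}(z))/(1 - z_κ ζ_+^κ(z)) = P_0 ∏_{κ=1}^{K-1} (1 - z_κ ζ_-^κ(z))/(1 - z_κ ζ_-^{κ-1}(z)), at all points z where all denominators are nonzero. -/

import Mathlib

theorem stmt_14 (K : ℕ) (hK : 2 ≤ K) (rr : ℕ → ℝ)
    (hpos : ∀ κ ∈ Finset.Icc 1 K, 0 < rr κ)
    (r : ℝ) (hr : r = ∑ κ ∈ Finset.Icc 1 K, rr κ)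
    (σ : ℕ → ℝ) (hσ : ∀ j, σ j = ∑ k ∈ Finset.Icc 1 j, rr k)
    (z : ℕ → ℝ)
    (β : ℕ → ℝ) (hβ : ∀ κ, β κ = ∑ k ∈ Finset.Icc 1 κ, z k * rr (K + 1 - k))
    (ζp ζm : ℕ → ℝ)
    (hsum : ∀ κ, κ ≤ K - 1 → ζp κ + ζm κ = 1 + r - β κ)
    (hprod : ∀ κ, κ ≤ K - 1 → ζp κ * ζm κ = σ (K - κ))
    (P0 : ℝ)
    (hdenp : ∀ κ ∈ Finset.Icc 1 (K - 1), 1 - z κ * ζp κ ≠ 0)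
    (hdenm : ∀ κ ∈ Finset.Icc 1 (K - 1), 1 - z κ * ζm (κ - 1) ≠ 0) :
    P0 * ∏ κ ∈ Finset.Icc 1 (K - 1), (1 - z κ * ζp (κ - 1)) / (1 - z κ * ζp κ) =
      P0 * ∏ κ ∈ Finset.Icc 1 (K - 1), (1 - z κ * ζm κ) / (1 - z κ * ζm (κ - 1)) := by
  congr 1
  apply Finset.prod_congr rfl
  intro κ hκ
  obtain ⟨h1, h2⟩ := Finset.mem_Icc.mp hκ
  rw [div_eq_div_iff (hdenp κ hκ) (hdenm κ hκ)]
  have hκ1 : κ - 1 ≤ K - 1 := le_trans (Nat.sub_le κ 1) h2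
  have hS := hsum κ h2
  have hS1 := hsum (κ - 1) hκ1
  have hP := hprod κ h2
  have hP1 := hprod (κ - 1) hκ1
  -- β κ = β (κ-1) + z κ * rr (K+1-κ)
  have hκeq : κ = (κ - 1) + 1 := (Nat.succ_pred_eq_of_pos h1).symm
  have hβstep : β κ = β (κ - 1) + z κ * rr (K + 1 - κ) := by
    have h := Finset.sum_Icc_succ_top (Nat.le_add_left 1 (κ - 1))
      (fun k => z k * rr (K + 1 - k))
    rw [← hκeq] at h
    rw [hβ κ, hβ (κ - 1), h]
  -- σ (K - (κ-1)) = σ (K - κ) + rr (K - κ + 1)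
  have hKκ : K - (κ - 1) = (K - κ) + 1 := by omega
  have hσstep : σ (K - (κ - 1)) = σ (K - κ) + rr (K - κ + 1) := by
    rw [hKκ, hσ, hσ, Finset.sum_Icc_succ_top (Nat.le_add_left 1 (K - κ))]
  have hrr : K + 1 - κ = K - κ + 1 := by omega
  rw [hrr] at hβstep
  linear_combination (-(z κ))*hS1 + (z κ)*hS + (z κ)^2*hP1 - (z κ)^2*hP
    - (z κ)*hβstep + (z κ)^2*hσstep
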